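/- Let 𝒲 be a self-adjoint linear endomorphism of Skew(n). If the image of 𝒲 contains an invertible matrix η (i.e. a nondegenerate two-form), then E(𝒲) = {0}. -/
import Mathlib


open scoped RealInnerProductSpace
open Matrix

noncomputable section

/-- The space `Skew(n)` of real skew-symmetric `n × n` matrices. -/
def SkewMat (n : ℕ) : Submodule ℝ (Matrix (Fin n) (Fin n) ℝ) where
  carrier := {A | Aᵀ = -A}
  add_mem' := by
    intro a b ha hb
    simp only [Set.mem_setOf_eq] at *
    simp [Matrix.transpose_add, ha, hb, neg_add]; abel
  zero_mem' := by simp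
  smul_mem' := by
    intro c a ha
    simp only [Set.mem_setOf_eq] at *
    simp [Matrix.transpose_smul, ha]

/-- The wedge `v ∧ θ := v θᵀ − θ vᵀ` as a matrix. -/
def wedge {n : ℕ} (v θ : EuclideanSpace ℝ (Fin n)) : Matrix (Fin n) (Fin n) ℝ :=
  Matrix.of fun i j => v i * θ j - θ i * v j

lemma wedge_mem {n : ℕ} (v θ : EuclideanSpace ℝ (Fin n)) : wedge v θ ∈ SkewMat n := by
  show (wedge v θ)ᵀ = -(wedge v θ)
  ext i j
  simp [wedge]
  ring

/-- The wedge `v ∧ θ` as an element of `Skew(n)`. -/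
def wedgeS {n : ℕ} (v θ : EuclideanSpace ℝ (Fin n)) : SkewMat n :=
  ⟨wedge v θ, wedge_mem v θ⟩

/-- The Frobenius inner product `⟨A, B⟩ = tr(Aᵀ B)` on `Skew(n)`. -/
def frobInner {n : ℕ} (A B : SkewMat n) : ℝ :=
  Matrix.trace ((A : Matrix (Fin n) (Fin n) ℝ)ᵀ * (B : Matrix (Fin n) (Fin n) ℝ))

/-- The subspace `E(𝒲) = {v : 𝒲(v ∧ θ) = 0 for all θ}`. -/
def Esp {n : ℕ} (𝒲 : SkewMat n →ₗ[ℝ] SkewMat n) :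
    Submodule ℝ (EuclideanSpace ℝ (Fin n)) where
  carrier := {v | ∀ θ : EuclideanSpace ℝ (Fin n), 𝒲 (wedgeS v θ) = 0}
  add_mem' := by
    intro a b ha hb θ
    have h : wedgeS (a + b) θ = wedgeS a θ + wedgeS b θ := by
      apply Subtype.ext
      ext i j
      simp [wedgeS, wedge, PiLp.add_apply]
      ring
    rw [h, map_add, ha θ, hb θ, add_zero]
  zero_mem' := by
    intro θ
    have h : wedgeS (0 : EuclideanSpace ℝ (Fin n)) θ = 0 := by
      apply Subtype.ext
      ext i j
      simp [wedgeS, wedge]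
    rw [h, map_zero]
  smul_mem' := by
    intro c a ha θ
    have h : wedgeS (c • a) θ = c • wedgeS a θ := by
      apply Subtype.ext
      ext i j
      simp [wedgeS, wedge, PiLp.smul_apply, Matrix.smul_apply, smul_eq_mul]
      ring
    rw [h, _root_.map_smul, ha θ, smul_zero]

theorem Esp_eq_bot_of_invertible_mem_range {n : ℕ} (𝒲 : SkewMat n →ₗ[ℝ] SkewMat n)
    (hW : ∀ A B : SkewMat n, frobInner (𝒲 A) B = frobInner A (𝒲 B))
    (η : SkewMat n) (hη : η ∈ LinearMap.range 𝒲)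
    (hinv : IsUnit (η : Matrix (Fin n) (Fin n) ℝ)) :
    Esp 𝒲 = ⊥ := by
  rw [eq_bot_iff]
  intro v hv
  obtain ⟨A, hA⟩ := hη
  have hv' : ∀ θ : EuclideanSpace ℝ (Fin n), 𝒲 (wedgeS v θ) = 0 := hv
  have key : ∀ θ : EuclideanSpace ℝ (Fin n), frobInner η (wedgeS v θ) = 0 := by
    intro θ
    rw [← hA, hW, hv' θ]
    simp [frobInner]
  have hskew : (η : Matrix (Fin n) (Fin n) ℝ)ᵀ = -(η : Matrix (Fin n) (Fin n) ℝ) := η.2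
  have hmul : (η : Matrix (Fin n) (Fin n) ℝ)ᵀ *ᵥ (v : Fin n → ℝ) = 0 := by
    funext j
    have h := key (EuclideanSpace.single j (1:ℝ))
    have hθ : ∀ i, (EuclideanSpace.single j (1:ℝ)) i = if i = j then 1 else 0 := by
      intro i; simp [EuclideanSpace.single_apply]
    simp only [frobInner, wedgeS, wedge, Matrix.trace, Matrix.diag, Matrix.mul_apply,
      Matrix.transpose_apply, Matrix.of_apply] at h
    have hsk : ∀ i, (η : Matrix (Fin n) (Fin n) ℝ) j i = -(η : Matrix (Fin n) (Fin n) ℝ) i j := by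
      intro i
      have h2 := congrFun (congrFun hskew i) j
      simp only [Matrix.transpose_apply, Matrix.neg_apply] at h2
      linarith
    have hexp : ∑ i, ∑ k, (η : Matrix (Fin n) (Fin n) ℝ) k i *
        (v k * (EuclideanSpace.single j (1:ℝ)) i - (EuclideanSpace.single j (1:ℝ)) k * v i)
        = 2 * ((η : Matrix (Fin n) (Fin n) ℝ)ᵀ *ᵥ (v : Fin n → ℝ)) j := by
      simp only [hθ, Matrix.mulVec, dotProduct, Matrix.transpose_apply]
      rw [Finset.sum_comm]
      simp only [mul_sub, Finset.sum_sub_distrib]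
      simp [mul_ite, ite_mul, Finset.mul_sum]
      simp only [hsk]
      rw [← Finset.sum_sub_distrib]
      exact Finset.sum_congr rfl (fun i _ => by ring)
    rw [hexp] at h
    simp only [Pi.zero_apply]
    linarith
  have hinvT : IsUnit (η : Matrix (Fin n) (Fin n) ℝ)ᵀ := by
    rw [Matrix.isUnit_iff_isUnit_det, Matrix.det_transpose, ← Matrix.isUnit_iff_isUnit_det]
    exact hinv
  have hinj := Matrix.mulVec_injective_iff_isUnit.2 hinvT
  have hv0 : (v : Fin n → ℝ) = 0 := by
    apply hinj
    rw [hmul, Matrix.mulVec_zero]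
  ext i
  exact congrFun hv0 i

end
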